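/- Let α > 0 and assume a closed set E ⊂ X satisfies the upper Aikawa condition with exponent α. Then for every ε > 0 there exists δ > 0 with the following property. Let z ∈ E, r > 0, and let F be the truncated set obtained from E, z, r by the truncation construction. Let m ∈ ℕ₀ and x ∈ X be such that dist(x,F) < 2^{−m+1} r and either 2^{−m−3} r < diam(E) if diam(E) > 0, or 2^{−m−3} r < diam(X) if diam(E) = 0. Write r_m = 2^{−m−1} r. If K ⊂ X is a Borel set such that (1/μ(B(x,8r_m))) ∫_{B(x,8r_m)} 1_{X\K}(y) dμ(y) ≤ δ, then r_m^{−α} ≤ ε · (1/μ(B(x,8r_m))) ∫_{B(x,8r_m)} 1_K(y) dist(y,F)^{−α} dμ(y). -/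
import Mathlib


open Metric MeasureTheory Set
open scoped ENNReal NNReal

/-- The effective diameter bound: `diam E`, unless `diam E = 0`, in which case `diam X`. -/
noncomputable def diamBound {X : Type*} [PseudoEMetricSpace X] (E : Set X) : ℝ≥0∞ :=
  haveI := Classical.propDecidable
  if EMetric.diam E = 0 then EMetric.diam (Set.univ : Set X) else EMetric.diam E

/-- `E` satisfies the upper Aikawa condition with exponent `α`. -/
def upperAikawaCond {X : Type*} [MetricSpace X] [MeasurableSpace X]
    (μ : Measure X) (E : Set X) (α : ℝ) : Prop :=
  ∀ ε : ℝ, 0 < ε → ∃ δ : ℝ, 0 < δ ∧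
    ∀ z ∈ E, ∀ R : ℝ, 0 < R → ENNReal.ofReal R < diamBound E →
      ∀ K : Set X, MeasurableSet K →
        μ (ball z R \ K) ≤ ENNReal.ofReal δ * μ (ball z R) →
        ENNReal.ofReal (R ^ (-α) / ε) ≤
          (μ (ball z R))⁻¹ *
            ∫⁻ y in ball z R ∩ K, ENNReal.ofReal (infDist y E ^ (-α)) ∂μ

/-- The truncation sequence: `F₀ = E ∩ closedBall z (r/2)` and recursively
`F_{j+1} = ⋃_{x ∈ F_j} E ∩ closedBall x (r / 2^(j+2))`. -/
def truncSeq {X : Type*} [MetricSpace X] (E : Set X) (z : X) (r : ℝ) : ℕ → Set X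
  | 0 => E ∩ closedBall z (r / 2)
  | j + 1 => ⋃ x ∈ truncSeq E z r j, E ∩ closedBall x (r / 2 ^ (j + 2))

/-- The truncated set `F`, the closure of the union of the truncation sequence. -/
def truncSet {X : Type*} [MetricSpace X] (E : Set X) (z : X) (r : ℝ) : Set X :=
  closure (⋃ j : ℕ, truncSeq E z r j)

lemma truncSeq_subset_E {X : Type*} [MetricSpace X] (E : Set X) (z : X) (r : ℝ) :
    ∀ j, truncSeq E z r j ⊆ E := by
  intro j
  cases j with
  | zero => exact inter_subset_left
  | succ j =>
    intro w hw
    obtain ⟨v, hv, hwE, _⟩ := mem_iUnion₂.mp hw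
    exact hwE

lemma truncSeq_mono {X : Type*} [MetricSpace X] (E : Set X) (z : X) (r : ℝ) (hr : 0 ≤ r) :
    Monotone (truncSeq E z r) := by
  apply monotone_nat_of_le_succ
  intro j w hw
  refine mem_iUnion₂.mpr ⟨w, hw, truncSeq_subset_E E z r j hw, ?_⟩
  exact Metric.mem_closedBall_self (by positivity)

lemma truncSeq_approx {X : Type*} [MetricSpace X] (E : Set X) (z : X) (r : ℝ) (m : ℕ) :
    ∀ J, ∀ w ∈ truncSeq E z r (m + J), ∃ w' ∈ truncSeq E z r m,
      dist w w' ≤ r / 2 ^ (m + 1) - r / 2 ^ (m + J + 1) := by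
  intro J
  induction J with
  | zero => intro w hw; exact ⟨w, hw, by simp⟩
  | succ J ih =>
    intro w hw
    have hw' : w ∈ truncSeq E z r ((m + J) + 1) := by
      rwa [show m + (J + 1) = (m + J) + 1 from rfl] at hw
    obtain ⟨v, hv, _, hwb⟩ := mem_iUnion₂.mp hw'
    obtain ⟨w', hw'm, hd⟩ := ih v hv
    refine ⟨w', hw'm, ?_⟩
    have hdv : dist w v ≤ r / 2 ^ (m + J + 2) := Metric.mem_closedBall.mp hwb
    have harith : r / 2 ^ (m + J + 2) + (r / 2 ^ (m + 1) - r / 2 ^ (m + J + 1)) =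
        r / 2 ^ (m + 1) - r / 2 ^ (m + (J + 1) + 1) := by
      have h1 : (2:ℝ) ^ (m + J + 2) = 2 ^ (m + J + 1) * 2 := by
        rw [show m + J + 2 = (m + J + 1) + 1 from rfl, pow_succ]
      have h2 : (2:ℝ) ^ (m + (J + 1) + 1) = 2 ^ (m + J + 1) * 2 := by
        rw [show m + (J + 1) + 1 = (m + J + 1) + 1 by omega, pow_succ]
      have h3 : (2:ℝ) ^ (m + J + 1) ≠ 0 := by positivity
      rw [h1, h2]
      field_simp
      ring
    calc dist w w' ≤ dist w v + dist v w' := dist_triangle _ _ _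
      _ ≤ r / 2 ^ (m + J + 2) + (r / 2 ^ (m + 1) - r / 2 ^ (m + J + 1)) := add_le_add hdv hd
      _ = r / 2 ^ (m + 1) - r / 2 ^ (m + (J + 1) + 1) := harith

/-- A local variant of the upper Aikawa condition persists for the truncated set `F`:
if `E` satisfies the upper Aikawa condition with exponent `α`, then for every `ε > 0`
there is `δ > 0` such that whenever `dist(x,F) < 2^{-m+1} r`, the scale `2^{-m-3} r` is
admissible, and `K` is a Borel set whose complement occupies at most a `δ`-fraction of
`B(x, 8 r_m)` (where `r_m = 2^{-m-1} r`), one has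
`r_m^{-α} ≤ ε ⨍_{B(x,8r_m)} 1_K dist(·,F)^{-α} dμ`. -/
theorem truncSet_upperAikawa_local {X : Type*} [MetricSpace X] [MeasurableSpace X] [BorelSpace X]
    [Nontrivial X]
    (μ : Measure X) (c_μ : ℝ) (hc : 1 < c_μ)
    (hball : ∀ (x : X) (ρ : ℝ), 0 < ρ → 0 < μ (ball x ρ) ∧ μ (ball x ρ) < ⊤)
    (hdoubling : ∀ (x : X) (ρ : ℝ), 0 < ρ →
      μ (ball x (2 * ρ)) ≤ ENNReal.ofReal c_μ * μ (ball x ρ))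
    (α : ℝ) (hα : 0 < α)
    (E : Set X) (hE : IsClosed E) (hEne : E.Nonempty)
    (haik : upperAikawaCond μ E α) :
    ∀ ε : ℝ, 0 < ε → ∃ δ : ℝ, 0 < δ ∧
      ∀ z ∈ E, ∀ r : ℝ, 0 < r → ∀ (m : ℕ) (x : X),
        infDist x (truncSet E z r) < 2 * r / 2 ^ m →
        ENNReal.ofReal (r / 2 ^ (m + 3)) < diamBound E →
        ∀ K : Set X, MeasurableSet K →
          (μ (ball x (8 * (r / 2 ^ (m + 1)))))⁻¹ *
              μ (ball x (8 * (r / 2 ^ (m + 1))) \ K) ≤ ENNReal.ofReal δ →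
          ENNReal.ofReal ((r / 2 ^ (m + 1)) ^ (-α)) ≤
            ENNReal.ofReal ε *
              ((μ (ball x (8 * (r / 2 ^ (m + 1)))))⁻¹ *
                ∫⁻ y in ball x (8 * (r / 2 ^ (m + 1))) ∩ K,
                  ENNReal.ofReal (infDist y (truncSet E z r) ^ (-α)) ∂μ) := by
  -- iterated doubling
  have hc0 : (0:ℝ) < c_μ := lt_trans one_pos hc
  have hiter : ∀ (w : X) (ρ : ℝ), 0 < ρ → ∀ k : ℕ,
      μ (ball w (2 ^ k * ρ)) ≤ (ENNReal.ofReal c_μ) ^ k * μ (ball w ρ) := by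
    intro w ρ hρ k
    induction k with
    | zero => simp
    | succ k ih =>
      have h : (2:ℝ) ^ (k + 1) * ρ = 2 * (2 ^ k * ρ) := by ring
      rw [h, pow_succ]
      calc μ (ball w (2 * (2 ^ k * ρ)))
          ≤ ENNReal.ofReal c_μ * μ (ball w (2 ^ k * ρ)) := hdoubling _ _ (by positivity)
        _ ≤ ENNReal.ofReal c_μ * ((ENNReal.ofReal c_μ) ^ k * μ (ball w ρ)) :=
            mul_le_mul_right ih _
        _ = (ENNReal.ofReal c_μ) ^ k * ENNReal.ofReal c_μ * μ (ball w ρ) := by ring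
  intro ε hε
  set c6 : ℝ := c_μ ^ 6 with hc6def
  have hc6 : (0:ℝ) < c6 := by positivity
  obtain ⟨δ', hδ', haik'⟩ := haik (ε / c6) (by positivity)
  refine ⟨δ' / c6, by positivity, ?_⟩
  intro z hz r hr m x hxF hdiam K hKmeas hsmall
  set F := truncSet E z r with hFdef
  set ρ : ℝ := r / 2 ^ (m + 3) with hρdef
  have hρ : 0 < ρ := by positivity
  have h2m : (2:ℝ) ^ m ≠ 0 := by positivity
  have h32 : 8 * (r / 2 ^ (m + 1)) = 32 * ρ := by
    rw [hρdef]; field_simp [pow_succ]; ring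
  have h16 : 2 * r / 2 ^ m = 16 * ρ := by
    rw [hρdef]; field_simp [pow_succ]; ring
  have h4 : r / 2 ^ (m + 1) = 4 * ρ := by
    rw [hρdef]; field_simp [pow_succ]; ring
  have h2ρ : r / 2 ^ (m + 2) = 2 * ρ := by
    rw [hρdef]; field_simp [pow_succ]; ring
  -- the union and basic set facts
  set U : Set X := ⋃ j : ℕ, truncSeq E z r j with hUdef
  have hUE : U ⊆ E := iUnion_subset fun j => truncSeq_subset_E E z r j
  have hFE : F ⊆ E := by
    rw [hFdef]; exact closure_minimal hUE hE
  have hzU : z ∈ U := mem_iUnion.mpr ⟨0, hz, Metric.mem_closedBall_self (by positivity)⟩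
  have hUne : U.Nonempty := ⟨z, hzU⟩
  have hFne : F.Nonempty := hUne.closure
  have hFclosed : IsClosed F := isClosed_closure
  -- find w' ∈ F_m close to x
  have hxU : infDist x U < 2 * r / 2 ^ m := by
    rwa [hFdef, truncSet, Metric.infDist_closure] at hxF
  obtain ⟨w, hwU, hxw⟩ := (Metric.infDist_lt_iff hUne).mp hxU
  obtain ⟨J, hwJ⟩ := mem_iUnion.mp hwU
  have hwmJ : w ∈ truncSeq E z r (m + J) :=
    truncSeq_mono E z r hr.le (Nat.le_add_left J m) hwJ
  obtain ⟨w', hw'm, hww'⟩ := truncSeq_approx E z r m J w hwmJ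
  have hw'E : w' ∈ E := truncSeq_subset_E E z r m hw'm
  have hww'' : dist w w' ≤ r / 2 ^ (m + 1) := by
    have : 0 ≤ r / 2 ^ (m + J + 1) := by positivity
    linarith
  have hxw' : dist x w' < 20 * ρ := by
    calc dist x w' ≤ dist x w + dist w w' := dist_triangle _ _ _
      _ < 2 * r / 2 ^ m + r / 2 ^ (m + 1) := by linarith [hww'']
      _ = 20 * ρ := by rw [h16, h4]; ring
  -- E near w' lies in F
  have hEF : E ∩ closedBall w' (r / 2 ^ (m + 2)) ⊆ F := by
    intro e he
    have : e ∈ truncSeq E z r (m + 1) := mem_iUnion₂.mpr ⟨w', hw'm, he⟩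
    exact subset_closure (mem_iUnion.mpr ⟨m + 1, this⟩)
  -- for y in the small ball, infDist y F ≤ infDist y E
  have hkey : ∀ y ∈ ball w' ρ, infDist y F ≤ infDist y E := by
    intro y hy
    have hyw' : dist y w' < ρ := Metric.mem_ball.mp hy
    have hyE : infDist y E < ρ := lt_of_le_of_lt (Metric.infDist_le_dist_of_mem hw'E) hyw'
    refine le_of_forall_pos_le_add ?_
    intro η hη
    have hlt : infDist y E < min ρ (infDist y E + η) :=
      lt_min hyE (lt_add_of_pos_right _ hη)
    obtain ⟨e, heE, hye⟩ := (Metric.infDist_lt_iff hEne).mp hlt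
    have hew' : e ∈ closedBall w' (r / 2 ^ (m + 2)) := by
      rw [Metric.mem_closedBall, h2ρ]
      calc dist e w' ≤ dist e y + dist y w' := dist_triangle _ _ _
        _ ≤ min ρ (infDist y E + η) + ρ := by
            rw [dist_comm]; exact add_le_add (le_of_lt hye) (le_of_lt hyw')
        _ ≤ ρ + ρ := by simp [min_le_left]
        _ = 2 * ρ := by ring
    have heF : e ∈ F := hEF ⟨heE, hew'⟩
    calc infDist y F ≤ dist y e := Metric.infDist_le_dist_of_mem heF
      _ ≤ min ρ (infDist y E + η) := le_of_lt hye
      _ ≤ infDist y E + η := min_le_right _ _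
  -- pointwise inequality of integrands on the small ball
  have hptwise : ∀ y ∈ ball w' ρ ∩ K,
      ENNReal.ofReal (infDist y E ^ (-α)) ≤ ENNReal.ofReal (infDist y F ^ (-α)) := by
    intro y hy
    have hFle := hkey y hy.1
    rcases eq_or_lt_of_le (Metric.infDist_nonneg (s := F) (x := y)) with h0 | hpos
    · -- infDist y F = 0, hence y ∈ F ⊆ E and infDist y E = 0
      have hyF : y ∈ F := by
        have := (Metric.mem_closure_iff_infDist_zero hFne).mpr h0.symm
        rwa [hFclosed.closure_eq] at this
      have hyE : infDist y E = 0 := Metric.infDist_zero_of_mem (hFE hyF)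
      rw [← h0, hyE]
    · exact ENNReal.ofReal_le_ofReal
        (Real.rpow_le_rpow_of_nonpos hpos hFle (neg_nonpos.mpr hα.le))
  -- balls and measures
  set B : Set X := ball x (8 * (r / 2 ^ (m + 1))) with hBdef
  set B' : Set X := ball w' ρ with hB'def
  have hB'B : B' ⊆ B := by
    intro y hy
    rw [hBdef, Metric.mem_ball, h32]
    calc dist y x ≤ dist y w' + dist w' x := dist_triangle _ _ _
      _ < ρ + 20 * ρ := by
          rw [dist_comm w' x]; exact add_lt_add (Metric.mem_ball.mp hy) hxw'
      _ ≤ 32 * ρ := by linarith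
  have hB64 : B ⊆ ball w' (2 ^ 6 * ρ) := by
    intro y hy
    rw [Metric.mem_ball]
    have hyx : dist y x < 32 * ρ := by rwa [hBdef, Metric.mem_ball, h32] at hy
    calc dist y w' ≤ dist y x + dist x w' := dist_triangle _ _ _
      _ < 32 * ρ + 20 * ρ := add_lt_add hyx hxw'
      _ ≤ 2 ^ 6 * ρ := by rw [show ((2:ℝ)^6 : ℝ) = 64 by norm_num]; linarith
  have hμB := hball x (8 * (r / 2 ^ (m + 1))) (by rw [h32]; positivity)
  have hμB' := hball w' ρ hρ
  have hBB' : μ B ≤ ENNReal.ofReal c6 * μ B' := by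
    calc μ B ≤ μ (ball w' (2 ^ 6 * ρ)) := measure_mono hB64
      _ ≤ (ENNReal.ofReal c_μ) ^ 6 * μ B' := hiter w' ρ hρ 6
      _ = ENNReal.ofReal c6 * μ B' := by
          rw [hc6def, ENNReal.ofReal_pow hc0.le]
  -- the Aikawa hypothesis for ball w' ρ
  have hsmall' : μ (ball w' ρ \ K) ≤ ENNReal.ofReal δ' * μ (ball w' ρ) := by
    have h1 : μ (B \ K) ≤ ENNReal.ofReal (δ' / c6) * μ B := by
      have := mul_le_mul_right hsmall (μ B)
      rwa [← mul_assoc, ENNReal.mul_inv_cancel hμB.1.ne' hμB.2.ne, one_mul,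
        mul_comm (μ B)] at this
    calc μ (ball w' ρ \ K) ≤ μ (B \ K) := measure_mono (diff_subset_diff_left hB'B)
      _ ≤ ENNReal.ofReal (δ' / c6) * μ B := h1
      _ ≤ ENNReal.ofReal (δ' / c6) * (ENNReal.ofReal c6 * μ B') := mul_le_mul_right hBB' _
      _ = ENNReal.ofReal (δ' / c6 * c6) * μ B' := by
          rw [ENNReal.ofReal_mul (by positivity), mul_assoc]
      _ = ENNReal.ofReal δ' * μ (ball w' ρ) := by
          rw [div_mul_cancel₀ _ hc6.ne']
  have haikconc := haik' w' hw'E ρ hρ hdiam K hKmeas hsmall'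
  -- upgrade: integrand E → F, set B' → B
  have hstep : ENNReal.ofReal (ρ ^ (-α) / (ε / c6)) ≤
      (μ B')⁻¹ * ∫⁻ y in B ∩ K, ENNReal.ofReal (infDist y F ^ (-α)) ∂μ := by
    refine le_trans haikconc (mul_le_mul_right ?_ _)
    calc ∫⁻ y in ball w' ρ ∩ K, ENNReal.ofReal (infDist y E ^ (-α)) ∂μ
        ≤ ∫⁻ y in ball w' ρ ∩ K, ENNReal.ofReal (infDist y F ^ (-α)) ∂μ :=
          setLIntegral_mono' (isOpen_ball.measurableSet.inter hKmeas) hptwise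
      _ ≤ ∫⁻ y in B ∩ K, ENNReal.ofReal (infDist y F ^ (-α)) ∂μ :=
          lintegral_mono_set (inter_subset_inter_left K hB'B)
  set I : ℝ≥0∞ := ∫⁻ y in B ∩ K, ENNReal.ofReal (infDist y F ^ (-α)) ∂μ with hIdef
  -- final chain
  have hinv : (ENNReal.ofReal c6)⁻¹ * (μ B')⁻¹ ≤ (μ B)⁻¹ := by
    rw [← ENNReal.mul_inv (Or.inl (by simp [ENNReal.ofReal_eq_zero]; linarith))
      (Or.inl ENNReal.ofReal_ne_top)]
    exact ENNReal.inv_le_inv' hBB'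
  have hfinal : ENNReal.ofReal (ρ ^ (-α)) ≤ ENNReal.ofReal ε * ((μ B)⁻¹ * I) := by
    have e1 : ENNReal.ofReal (ρ ^ (-α)) =
        ENNReal.ofReal ε * ((ENNReal.ofReal c6)⁻¹ * ENNReal.ofReal (ρ ^ (-α) / (ε / c6))) := by
      rw [← ENNReal.ofReal_inv_of_pos hc6, ← ENNReal.ofReal_mul (by positivity),
        ← ENNReal.ofReal_mul hε.le]
      congr 1
      field_simp
    rw [e1]
    refine mul_le_mul_right ?_ _
    calc (ENNReal.ofReal c6)⁻¹ * ENNReal.ofReal (ρ ^ (-α) / (ε / c6))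
        ≤ (ENNReal.ofReal c6)⁻¹ * ((μ B')⁻¹ * I) := mul_le_mul_right hstep _
      _ = (ENNReal.ofReal c6)⁻¹ * (μ B')⁻¹ * I := by rw [mul_assoc]
      _ ≤ (μ B)⁻¹ * I := mul_le_mul_left hinv _
  refine le_trans ?_ hfinal
  apply ENNReal.ofReal_le_ofReal
  apply Real.rpow_le_rpow_of_nonpos hρ ?_ (neg_nonpos.mpr hα.le)
  rw [h4]; linarith
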